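/- Let F be a field, k ≥ 2, α_{k−1} ∈ F nonzero, D_k ∈ F^{m×m}, v ∈ F^k, H ∈ F^{km×(k−1)m}, and X, Y ∈ F^{n×n}. Assume X, Y and K_0 := [v⊗I_m, H] ∈ F^{km×km} are invertible. Set L_1 := [α_{k−1}^{−1}(v⊗D_k), H] ∈ F^{km×km} (equivalently L_1 = K_0·diag(α_{k−1}^{−1}D_k, I_{(k−1)m})) and 𝓛_1 := [[XY, 0],[0, L_1]] ∈ F^{(n+km)×(n+km)}. Then: (1) every (w;x) with 𝓛_1·(w;x) = 0 has w = 0; (2) for every x_0 ∈ F^m, D_k x_0 = 0 if and only if 𝓛_1·(0; e_1⊗x_0) = 0, where e_1 is the first canonical vector of F^k; (3) the map x_0 ↦ (0; e_1⊗x_0) is a linear isomorphism from ker D_k onto ker 𝓛_1; in particular x_1, …, x_q is a basis of ker D_k if and only if (0; e_1⊗x_1), …, (0; e_1⊗x_q) is a basis of ker 𝓛_1. -/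
import Mathlib


open Matrix

/-- The matrix `v ⊗ I_m ∈ R^{km×m}` built from a vector `v ∈ R^k`. -/
def vKron {R : Type*} [Semiring R] (k m : ℕ) (v : Fin k → R) :
    Matrix (Fin k × Fin m) (Fin m) R :=
  Matrix.of fun p j => if p.2 = j then v p.1 else 0

/-- The constant `km × km` matrix `[v ⊗ I_m, H]`. -/
def concatKron {F : Type*} [Field F] (k m : ℕ) (v : Fin k → F)
    (H : Matrix (Fin k × Fin m) (Fin (k - 1) × Fin m) F) :
    Matrix (Fin k × Fin m) (Fin k × Fin m) F :=
  Matrix.of fun p q =>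
    if h : (q.1 : ℕ) = 0 then (if p.2 = q.2 then v p.1 else 0)
    else H p (⟨(q.1 : ℕ) - 1, by have := q.1.isLt; omega⟩, q.2)

namespace RecAux
variable {F : Type*} [Field F] {m k : ℕ}

def Dblk (k m : ℕ) {F : Type*} [Field F] (a : F) (Dk : Matrix (Fin m) (Fin m) F) :
    Matrix (Fin k × Fin m) (Fin k × Fin m) F :=
  Matrix.of fun p q =>
    if (q.1 : ℕ) = 0 then (if (p.1 : ℕ) = 0 then a⁻¹ * Dk p.2 q.2 else 0)
    else (if p = q then 1 else 0)

lemma factor (hk : 0 < k) (a : F) (Dk : Matrix (Fin m) (Fin m) F)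
    (v : Fin k → F) (H : Matrix (Fin k × Fin m) (Fin (k - 1) × Fin m) F) :
    (Matrix.of fun p q : Fin k × Fin m =>
      if _ : (q.1 : ℕ) = 0 then a⁻¹ * v p.1 * Dk p.2 q.2
      else H p (⟨(q.1 : ℕ) - 1, by have := q.1.isLt; omega⟩, q.2)) =
    concatKron k m v H * Dblk k m a Dk := by
  ext p q
  rw [Matrix.mul_apply]
  by_cases hq : (q.1 : ℕ) = 0
  · rw [Finset.sum_eq_single ((⟨0, hk⟩ : Fin k), p.2)]
    · simp [concatKron, Dblk, hq]
      ring
    · intro r _ hr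
      simp only [concatKron, Dblk, Matrix.of_apply]
      by_cases hr1 : (r.1 : ℕ) = 0
      · have h2 : p.2 ≠ r.2 := by
          intro h
          apply hr
          have : r.1 = ⟨0, hk⟩ := Fin.ext hr1
          rw [Prod.ext_iff]
          exact ⟨this, h.symm⟩
        rw [dif_pos hr1, if_neg h2, zero_mul]
      · rw [dif_neg hr1, if_pos hq, if_neg hr1, mul_zero]
    · intro h; exact absurd (Finset.mem_univ _) h
  · rw [Finset.sum_eq_single q]
    · simp [concatKron, Dblk, hq]
    · intro r _ hr
      simp only [concatKron, Dblk, Matrix.of_apply]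
      rw [if_neg hq, if_neg hr, mul_zero]
    · intro h; exact absurd (Finset.mem_univ _) h

lemma Dblk_mulVec (hk : 0 < k) (a : F) (Dk : Matrix (Fin m) (Fin m) F)
    (x : Fin k × Fin m → F) (p : Fin k × Fin m) :
    (Dblk k m a Dk *ᵥ x) p =
      if (p.1 : ℕ) = 0 then a⁻¹ * (Dk *ᵥ fun j => x (⟨0, hk⟩, j)) p.2 else x p := by
  rw [Matrix.mulVec, dotProduct]
  by_cases hp : (p.1 : ℕ) = 0
  · rw [if_pos hp, Matrix.mulVec, dotProduct, Finset.mul_sum,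
      Fintype.sum_prod_type, Finset.sum_eq_single (⟨0, hk⟩ : Fin k)]
    · refine Finset.sum_congr rfl fun r _ => ?_
      simp only [Dblk, Matrix.of_apply, Fin.val_mk, if_true, hp]
      ring
    · intro r _ hr
      refine Finset.sum_eq_zero fun j _ => ?_
      have hr0 : (r : ℕ) ≠ 0 := fun h => hr (Fin.ext h)
      simp only [Dblk, Matrix.of_apply, if_neg hr0]
      rw [if_neg (by rintro rfl; exact hr0 hp), zero_mul]
    · intro h; exact absurd (Finset.mem_univ _) h
  · rw [if_neg hp, Finset.sum_eq_single p]
    · simp [Dblk, hp]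
    · intro r _ hr
      simp only [Dblk, Matrix.of_apply]
      by_cases hr1 : (r.1 : ℕ) = 0
      · rw [if_pos hr1, if_neg hp, zero_mul]
      · rw [if_neg hr1, if_neg fun h => hr h.symm, zero_mul]
    · intro h; exact absurd (Finset.mem_univ _) h

lemma Dblk_mulVec_zero_iff (hk : 0 < k) {a : F} (ha : a ≠ 0) (Dk : Matrix (Fin m) (Fin m) F)
    (x : Fin k × Fin m → F) :
    Dblk k m a Dk *ᵥ x = 0 ↔
      (Dk *ᵥ fun j => x (⟨0, hk⟩, j)) = 0 ∧
        ∀ p : Fin k × Fin m, (p.1 : ℕ) ≠ 0 → x p = 0 := by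
  constructor
  · intro h
    constructor
    · funext j
      have h1 := congrFun h ((⟨0, hk⟩ : Fin k), j)
      rw [Dblk_mulVec hk, if_pos rfl] at h1
      exact (mul_eq_zero.1 h1).resolve_left (inv_ne_zero ha)
    · intro p hp
      have h1 := congrFun h p
      rwa [Dblk_mulVec hk, if_neg hp] at h1
  · rintro ⟨h1, h2⟩
    funext p
    rw [Dblk_mulVec hk]
    by_cases hp : (p.1 : ℕ) = 0
    · rw [if_pos hp, congrFun h1 p.2]
      simp
    · rw [if_neg hp, h2 p hp]; rfl

lemma mulVec_zero_iff {ι : Type*} [Fintype ι] [DecidableEq ι] {M : Matrix ι ι F}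
    (hM : IsUnit M.det) {x : ι → F} : M *ᵥ x = 0 ↔ x = 0 := by
  constructor
  · intro h
    have h2 : M⁻¹ *ᵥ (M *ᵥ x) = M⁻¹ *ᵥ 0 := by rw [h]
    rwa [Matrix.mulVec_mulVec, Matrix.nonsing_inv_mul M hM, Matrix.one_mulVec,
      Matrix.mulVec_zero] at h2
  · rintro rfl; exact Matrix.mulVec_zero M

end RecAux

/-- Recovery of the eigenvectors associated to the infinite eigenvalue
from the leading coefficient `𝓛₁ = [[XY, 0], [0, L₁]]`, `L₁ = [α_{k-1}⁻¹(v⊗D_k), H]`,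
of an `𝕄₁`-strong linearization: `ker 𝓛₁` corresponds to `ker D_k` via `x₀ ↦ (0; e₁⊗x₀)`. -/
theorem recovery_infinite_eigenvectors_M1
    {F : Type*} [Field F] {m n k : ℕ} (hk : 2 ≤ k)
    (a : F) (ha : a ≠ 0)
    (Dk : Matrix (Fin m) (Fin m) F)
    (v : Fin k → F) (H : Matrix (Fin k × Fin m) (Fin (k - 1) × Fin m) F)
    (X Y : Matrix (Fin n) (Fin n) F)
    (hX : IsUnit X.det) (hY : IsUnit Y.det)
    (hK0 : IsUnit (concatKron k m v H).det)
    (L₁ : Matrix (Fin k × Fin m) (Fin k × Fin m) F)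
    (hL₁ : L₁ = Matrix.of fun p q =>
      if h : (q.1 : ℕ) = 0 then a⁻¹ * v p.1 * Dk p.2 q.2
      else H p (⟨(q.1 : ℕ) - 1, by have := q.1.isLt; omega⟩, q.2))
    (𝓛₁ : Matrix (Fin n ⊕ (Fin k × Fin m)) (Fin n ⊕ (Fin k × Fin m)) F)
    (h𝓛₁ : 𝓛₁ = Matrix.fromBlocks (X * Y) 0 0 L₁) :
    (∀ (w : Fin n → F) (x : Fin k × Fin m → F),
      𝓛₁ *ᵥ Sum.elim w x = 0 → w = 0) ∧
    (∀ x₀ : Fin m → F,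
      Dk *ᵥ x₀ = 0 ↔
        𝓛₁ *ᵥ Sum.elim (0 : Fin n → F)
          (fun p : Fin k × Fin m => if (p.1 : ℕ) = 0 then x₀ p.2 else 0) = 0) ∧
    (∃ e : LinearMap.ker Dk.mulVecLin ≃ₗ[F] LinearMap.ker 𝓛₁.mulVecLin,
      ∀ x₀ : LinearMap.ker Dk.mulVecLin,
        (e x₀ : Fin n ⊕ (Fin k × Fin m) → F)
          = Sum.elim (0 : Fin n → F)
              (fun p : Fin k × Fin m =>
                if (p.1 : ℕ) = 0 then (x₀ : Fin m → F) p.2 else 0)) ∧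
    (∀ (q : ℕ) (u : Fin q → (Fin m → F)),
      (LinearIndependent F u ∧
          Submodule.span F (Set.range u) = LinearMap.ker Dk.mulVecLin) ↔
      (LinearIndependent F (fun i => Sum.elim (0 : Fin n → F)
            (fun p : Fin k × Fin m => if (p.1 : ℕ) = 0 then u i p.2 else 0)) ∧
        Submodule.span F (Set.range (fun i => Sum.elim (0 : Fin n → F)
            (fun p : Fin k × Fin m => if (p.1 : ℕ) = 0 then u i p.2 else 0)))
          = LinearMap.ker 𝓛₁.mulVecLin)) := by
  have hk0 : 0 < k := by omega
  have hfac : L₁ = concatKron k m v H * RecAux.Dblk k m a Dk :=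
    hL₁.trans (RecAux.factor hk0 a Dk v H)
  -- master kernel characterization
  have key : ∀ (w : Fin n → F) (x : Fin k × Fin m → F),
      𝓛₁ *ᵥ Sum.elim w x = 0 ↔
        (w = 0 ∧ (Dk *ᵥ fun j => x (⟨0, hk0⟩, j)) = 0 ∧
          ∀ p : Fin k × Fin m, (p.1 : ℕ) ≠ 0 → x p = 0) := by
    intro w x
    rw [h𝓛₁, Matrix.fromBlocks_mulVec]
    simp only [Sum.elim_comp_inl, Sum.elim_comp_inr]
    have hsum : (Sum.elim ((X * Y) *ᵥ w + 0 *ᵥ x) ((0 : Matrix _ _ F) *ᵥ w + L₁ *ᵥ x)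
        = (0 : Fin n ⊕ (Fin k × Fin m) → F)) ↔ ((X * Y) *ᵥ w = 0 ∧ L₁ *ᵥ x = 0) := by
      simp only [Matrix.zero_mulVec, add_zero, zero_add, funext_iff, Sum.forall,
        Sum.elim_inl, Sum.elim_inr, Pi.zero_apply]
    rw [hsum, RecAux.mulVec_zero_iff (by rw [Matrix.det_mul]; exact hX.mul hY),
      hfac, ← Matrix.mulVec_mulVec, RecAux.mulVec_zero_iff hK0,
      RecAux.Dblk_mulVec_zero_iff hk0 ha]
  -- part 1
  have part1 : ∀ (w : Fin n → F) (x : Fin k × Fin m → F),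
      𝓛₁ *ᵥ Sum.elim w x = 0 → w = 0 := fun w x h => ((key w x).1 h).1
  -- part 2
  have part2 : ∀ x₀ : Fin m → F,
      Dk *ᵥ x₀ = 0 ↔
        𝓛₁ *ᵥ Sum.elim (0 : Fin n → F)
          (fun p : Fin k × Fin m => if (p.1 : ℕ) = 0 then x₀ p.2 else 0) = 0 := by
    intro x₀
    rw [key]
    constructor
    · intro h
      exact ⟨rfl, by simpa using h, fun p hp => if_neg hp⟩
    · rintro ⟨-, h, -⟩
      simpa using h
  -- the linear map φ
  let φ : (Fin m → F) →ₗ[F] (Fin n ⊕ (Fin k × Fin m) → F) :=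
    { toFun := fun x₀ => Sum.elim (0 : Fin n → F)
        (fun p : Fin k × Fin m => if (p.1 : ℕ) = 0 then x₀ p.2 else 0)
      map_add' := by
        intro x y
        funext s
        cases s with
        | inl i => simp
        | inr p =>
          simp only [Sum.elim_inr, Pi.add_apply]
          split_ifs <;> simp
      map_smul' := by
        intro c x
        funext s
        cases s with
        | inl i => simp
        | inr p =>
          simp only [Sum.elim_inr, Pi.smul_apply, RingHom.id_apply]
          split_ifs <;> simp }
  have hφinj : Function.Injective φ := by
    intro x y h
    funext j
    have := congrFun h (Sum.inr ((⟨0, hk0⟩ : Fin k), j))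
    simpa [φ] using this
  have hφmem : ∀ x₀, x₀ ∈ LinearMap.ker Dk.mulVecLin →
      φ x₀ ∈ LinearMap.ker 𝓛₁.mulVecLin := by
    intro x₀ hx
    rw [LinearMap.mem_ker, Matrix.mulVecLin_apply]
    exact (part2 x₀).1 (by rwa [LinearMap.mem_ker, Matrix.mulVecLin_apply] at hx)
  have hsurj : ∀ y : Fin n ⊕ (Fin k × Fin m) → F, 𝓛₁ *ᵥ y = 0 →
      ∃ x₀, Dk *ᵥ x₀ = 0 ∧ φ x₀ = y := by
    intro y hy
    have hy' : 𝓛₁ *ᵥ Sum.elim (fun i => y (Sum.inl i)) (fun p => y (Sum.inr p)) = 0 := by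
      convert hy using 2
      funext s; cases s <;> rfl
    obtain ⟨hw, hx0, hrest⟩ := (key _ _).1 hy'
    refine ⟨fun j => y (Sum.inr ((⟨0, hk0⟩ : Fin k), j)), hx0, ?_⟩
    funext s
    cases s with
    | inl i => exact (congrFun hw i).symm
    | inr p =>
      show (if (p.1 : ℕ) = 0 then y (Sum.inr ((⟨0, hk0⟩ : Fin k), p.2)) else 0)
          = y (Sum.inr p)
      by_cases hp : (p.1 : ℕ) = 0
      · rw [if_pos hp,
          show ((⟨0, hk0⟩ : Fin k), p.2) = p from (Prod.ext (Fin.ext hp.symm) rfl)]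
      · rw [if_neg hp, (hrest p hp).symm]
  have hmapker : Submodule.map φ (LinearMap.ker Dk.mulVecLin)
      = LinearMap.ker 𝓛₁.mulVecLin := by
    apply le_antisymm
    · rintro _ ⟨x, hx, rfl⟩
      exact hφmem x hx
    · intro y hy
      rw [LinearMap.mem_ker, Matrix.mulVecLin_apply] at hy
      obtain ⟨x₀, h1, h2⟩ := hsurj y hy
      refine ⟨x₀, SetLike.mem_coe.2 ?_, h2⟩
      rw [LinearMap.mem_ker, Matrix.mulVecLin_apply]
      exact h1
  -- part 3
  let ψ : LinearMap.ker Dk.mulVecLin →ₗ[F] LinearMap.ker 𝓛₁.mulVecLin :=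
    φ.restrict hφmem
  have hψbij : Function.Bijective ψ := by
    constructor
    · intro x y h
      exact Subtype.ext (hφinj (congrArg Subtype.val h))
    · rintro ⟨y, hy⟩
      rw [LinearMap.mem_ker, Matrix.mulVecLin_apply] at hy
      obtain ⟨x₀, h1, h2⟩ := hsurj y hy
      refine ⟨⟨x₀, ?_⟩, Subtype.ext h2⟩
      rw [LinearMap.mem_ker, Matrix.mulVecLin_apply]
      exact h1
  have part3 : ∃ e : LinearMap.ker Dk.mulVecLin ≃ₗ[F] LinearMap.ker 𝓛₁.mulVecLin,
      ∀ x₀ : LinearMap.ker Dk.mulVecLin,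
        (e x₀ : Fin n ⊕ (Fin k × Fin m) → F)
          = Sum.elim (0 : Fin n → F)
              (fun p : Fin k × Fin m =>
                if (p.1 : ℕ) = 0 then (x₀ : Fin m → F) p.2 else 0) := by
    exact ⟨LinearEquiv.ofBijective ψ hψbij, fun x₀ => rfl⟩
  refine ⟨part1, part2, part3, ?_⟩
  -- part 4
  intro q u
  have hcomp : (fun i => Sum.elim (0 : Fin n → F)
      (fun p : Fin k × Fin m => if (p.1 : ℕ) = 0 then u i p.2 else 0)) = φ ∘ u := rfl
  have hspan : (Submodule.span F (Set.range u) = LinearMap.ker Dk.mulVecLin) ↔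
      (Submodule.span F (Set.range (φ ∘ u)) = LinearMap.ker 𝓛₁.mulVecLin) := by
    rw [Set.range_comp, ← Submodule.map_span, ← hmapker]
    exact ⟨fun h => by rw [h],
      fun h => Submodule.map_injective_of_injective hφinj h⟩
  rw [hcomp, LinearMap.linearIndependent_iff φ (LinearMap.ker_eq_bot.2 hφinj), hspan]
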